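/- Let T* be a minimum weight spanning tree (Kruskal tree) of a connected edge-weighted graph (G,ρ), and T any spanning tree. If (e_1,…,e_{n−1}) and (e'_1,…,e'_{n−1}) are the edges of T* and T listed in increasing order of ρ, then ρ(e_i) ≤ ρ(e'_i) for every i. -/

import Mathlib

open Classical

noncomputable section CongestionDefs

variable {V : Type*} [Fintype V] [DecidableEq V]

/-- Weighted congestion of an edge `e` of a spanning tree `T` of `G`: total weight of
edges of `G` whose endpoints are separated in `T` with `e` removed. -/
def edgeCongestion (G T : SimpleGraph V) (ω : Sym2 V → ℝ) (e : Sym2 V) : ℝ :=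
  ∑ f : Sym2 V,
    if f ∈ G.edgeSet ∧ ∃ a b : V, f = s(a, b) ∧ ¬ (T.deleteEdges {e}).Reachable a b
    then ω f else 0

/-- The `L^p` congestion of a spanning tree `T` (for a natural `p ≥ 1`). -/
def treeCong (G T : SimpleGraph V) (ω : Sym2 V → ℝ) (p : ℕ) : ℝ :=
  (∑ e : Sym2 V, if e ∈ T.edgeSet then (edgeCongestion G T ω e) ^ p else 0) ^ ((1 : ℝ) / p)

/-- The `L^∞` congestion of a spanning tree `T`. -/
def treeCongTop (G T : SimpleGraph V) (ω : Sym2 V → ℝ) : ℝ :=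
  ⨆ e ∈ T.edgeSet, edgeCongestion G T ω e

/-- `T` is a spanning tree of `G`. -/
def IsSpanningTree (G T : SimpleGraph V) : Prop := T ≤ G ∧ T.IsTree

/-- The `L^p` spanning tree congestion of `(G, ω)`. -/
def graphCong (G : SimpleGraph V) (ω : Sym2 V → ℝ) (p : ℕ) : ℝ :=
  sInf {x | ∃ T : SimpleGraph V, IsSpanningTree G T ∧ treeCong G T ω p = x}

/-- The `L^∞` spanning tree congestion of `(G, ω)`. -/
def graphCongTop (G : SimpleGraph V) (ω : Sym2 V → ℝ) : ℝ :=
  sInf {x | ∃ T : SimpleGraph V, IsSpanningTree G T ∧ treeCongTop G T ω = x}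

/-- Total weight of (the edges of) a graph. -/
def totalWeight (T : SimpleGraph V) (ρ : Sym2 V → ℝ) : ℝ :=
  ∑ e : Sym2 V, if e ∈ T.edgeSet then ρ e else 0

end CongestionDefs

section Helpers
open SimpleGraph
variable {V : Type*}




lemma myAcyclicMono {G H : SimpleGraph V} (h : G ≤ H) (hH : H.IsAcyclic) : G.IsAcyclic := by
  intro v c hc
  exact hH (c.mapLe h) (hc.mapLe h)

lemma mySym2Rep (e : Sym2 V) : ∃ a b : V, e = s(a, b) := by
  induction e using Sym2.ind with
  | _ x y => exact ⟨x, y, rfl⟩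

/-- Splitting reachability over a deleted edge. -/
lemma myReachSplitWalk {H : SimpleGraph V} (c d : V) {x y : V} (p : H.Walk x y) :
    (H.deleteEdges {s(c,d)}).Reachable x y ∨
    ((H.deleteEdges {s(c,d)}).Reachable x c ∧ (H.deleteEdges {s(c,d)}).Reachable d y) ∨
    ((H.deleteEdges {s(c,d)}).Reachable x d ∧ (H.deleteEdges {s(c,d)}).Reachable c y) := by
  set H' := H.deleteEdges {s(c,d)} with hH'
  induction p with
  | nil => exact Or.inl (Reachable.refl _)
  | @cons x z y h q ih =>
    by_cases he : s(x, z) = s(c, d)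
    · rw [Sym2.eq_iff] at he
      rcases he with ⟨rfl, rfl⟩ | ⟨rfl, rfl⟩
      · rcases ih with h1 | ⟨h1, h2⟩ | ⟨h1, h2⟩
        · exact Or.inr (Or.inl ⟨Reachable.refl _, h1⟩)
        · exact Or.inr (Or.inl ⟨Reachable.refl _, h2⟩)
        · exact Or.inl h2
      · rcases ih with h1 | ⟨h1, h2⟩ | ⟨h1, h2⟩
        · exact Or.inr (Or.inr ⟨Reachable.refl _, h1⟩)
        · exact Or.inl h2
        · exact Or.inr (Or.inr ⟨Reachable.refl _, h2⟩)
    · have hxz : H'.Adj x z := by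
        rw [hH', deleteEdges_adj]
        exact ⟨h, by simpa using he⟩
      rcases ih with h1 | ⟨h1, h2⟩ | ⟨h1, h2⟩
      · exact Or.inl (hxz.reachable.trans h1)
      · exact Or.inr (Or.inl ⟨hxz.reachable.trans h1, h2⟩)
      · exact Or.inr (Or.inr ⟨hxz.reachable.trans h1, h2⟩)

lemma myReachSplit {H : SimpleGraph V} (c d : V) {x y : V} (h : H.Reachable x y) :
    (H.deleteEdges {s(c,d)}).Reachable x y ∨
    ((H.deleteEdges {s(c,d)}).Reachable x c ∧ (H.deleteEdges {s(c,d)}).Reachable d y) ∨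
    ((H.deleteEdges {s(c,d)}).Reachable x d ∧ (H.deleteEdges {s(c,d)}).Reachable c y) := by
  obtain ⟨p⟩ := h
  exact myReachSplitWalk c d p


lemma myCCStep [Fintype V] [DecidableEq V] {H : SimpleGraph V} (hH : H.IsAcyclic)
    {c d : V} (hcd : s(c,d) ∈ H.edgeSet) :
    Nat.card (H.deleteEdges {s(c,d)}).ConnectedComponent = Nat.card H.ConnectedComponent + 1 := by
  classical
  set H' := H.deleteEdges {s(c,d)} with hH'
  have hcd' : H.Adj c d := hcd
  have hbr : ¬ H'.Reachable c d := by
    have := (isAcyclic_iff_forall_edge_isBridge.mp hH) hcd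
    rw [isBridge_iff] at this
    exact this
  letI : Fintype H.ConnectedComponent := Fintype.ofFinite _
  letI : Fintype H'.ConnectedComponent := Fintype.ofFinite _
  rw [Nat.card_eq_fintype_card, Nat.card_eq_fintype_card]
  set φ : H'.ConnectedComponent → H.ConnectedComponent :=
    ConnectedComponent.map (Hom.ofLE (H.deleteEdges_le _)) with hφ
  have hφmk : ∀ v : V, φ (H'.connectedComponentMk v) = H.connectedComponentMk v := fun v => rfl
  have hle : H' ≤ H := H.deleteEdges_le _
  have hcard : (Finset.univ : Finset H'.ConnectedComponent).card =
      ∑ C ∈ (Finset.univ : Finset H.ConnectedComponent),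
        (Finset.univ.filter fun x => φ x = C).card :=
    Finset.card_eq_sum_card_fiberwise (fun x _ => Finset.mem_univ _)
  have hfib : ∀ C : H.ConnectedComponent,
      (Finset.univ.filter fun x => φ x = C).card
        = if C = H.connectedComponentMk c then 2 else 1 := by
    intro C
    refine SimpleGraph.ConnectedComponent.ind (fun v => ?_) C
    by_cases hC : H.connectedComponentMk v = H.connectedComponentMk c
    · rw [if_pos hC]
      rw [ConnectedComponent.eq] at hC
      have : (Finset.univ.filter fun x => φ x = H.connectedComponentMk v)
          = {H'.connectedComponentMk c, H'.connectedComponentMk d} := by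
        ext x
        refine SimpleGraph.ConnectedComponent.ind (fun w => ?_) x
        simp only [Finset.mem_filter, Finset.mem_univ, true_and, hφmk,
          Finset.mem_insert, Finset.mem_singleton, ConnectedComponent.eq]
        constructor
        · intro hwv
          have hwc : H.Reachable w c := hwv.trans hC
          rcases myReachSplit c d hwc with h1 | ⟨h1, _⟩ | ⟨h1, _⟩
          · exact Or.inl h1
          · exact Or.inl h1
          · exact Or.inr h1
        · rintro (h | h)
          · exact (h.mono hle).trans hC.symm
          · exact ((h.mono hle).trans hcd'.reachable.symm).trans hC.symm
      rw [this, Finset.card_insert_of_notMem, Finset.card_singleton]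
      simp only [Finset.mem_singleton, ConnectedComponent.eq]
      exact hbr
    · rw [if_neg hC]
      rw [Finset.card_eq_one]
      refine ⟨H'.connectedComponentMk v, ?_⟩
      ext x
      refine SimpleGraph.ConnectedComponent.ind (fun w => ?_) x
      simp only [Finset.mem_filter, Finset.mem_univ, true_and, hφmk,
        Finset.mem_singleton, ConnectedComponent.eq]
      have hvc : ¬ H.Reachable v c := fun h => hC (ConnectedComponent.eq.mpr h)
      constructor
      · intro hwv
        rcases myReachSplit c d hwv with h1 | ⟨h1, h2⟩ | ⟨h1, h2⟩
        · exact h1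
        · exact absurd (hwv.symm.trans (h1.mono hle)) hvc
        · exact absurd (h2.mono hle).symm hvc
      · intro h
        exact h.mono hle

  rw [← Nat.card_eq_fintype_card, ← Nat.card_eq_fintype_card, Nat.card_eq_fintype_card,
    Nat.card_eq_fintype_card, Fintype.card, Fintype.card, hcard,
    Finset.sum_congr rfl (fun C _ => hfib C)]
  have h2 : ∀ C : H.ConnectedComponent, (if C = H.connectedComponentMk c then 2 else 1)
      = (if C = H.connectedComponentMk c then (1:ℕ) else 0) + 1 := by
    intro C; split <;> rfl
  simp_rw [h2]
  rw [Finset.sum_add_distrib, Finset.sum_ite_eq' Finset.univ (H.connectedComponentMk c)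
    (fun _ => (1:ℕ)), if_pos (Finset.mem_univ _), Finset.sum_const, smul_eq_mul, mul_one]
  omega

lemma myForestCardAux [Fintype V] [DecidableEq V] :
    ∀ (n : ℕ) (H : SimpleGraph V), H.edgeSet.ncard = n → H.IsAcyclic →
      n + Nat.card H.ConnectedComponent = Fintype.card V := by
  intro n
  induction n with
  | zero =>
    intro H hn _
    have : H = ⊥ := by
      rwa [← SimpleGraph.edgeSet_eq_empty, ← Set.ncard_eq_zero (Set.toFinite _)]
    subst this
    have hbij : Function.Bijective (⊥ : SimpleGraph V).connectedComponentMk := by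
      constructor
      · intro u v h
        exact reachable_bot.mp (ConnectedComponent.eq.mp h)
      · intro C
        exact C.exists_rep
    rw [zero_add, Nat.card_congr (Equiv.ofBijective _ hbij).symm, Nat.card_eq_fintype_card]
  | succ n ih =>
    intro H hn hH
    have hne : H.edgeSet.Nonempty := by
      rw [← Set.ncard_pos (Set.toFinite _), hn]; omega
    obtain ⟨e, he⟩ := hne
    obtain ⟨a, b, rfl⟩ := mySym2Rep e
    have hn' : (H.deleteEdges {s(a,b)}).edgeSet.ncard = n := by
      rw [edgeSet_deleteEdges, Set.ncard_diff_singleton_of_mem he, hn]; omega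
    have hacy' : (H.deleteEdges {s(a,b)}).IsAcyclic := myAcyclicMono (H.deleteEdges_le _) hH
    have := ih (H.deleteEdges {s(a,b)}) hn' hacy'
    rw [myCCStep hH he] at this
    omega

lemma myForestCard [Fintype V] [DecidableEq V] {H : SimpleGraph V} (hH : H.IsAcyclic) :
    H.edgeSet.ncard + Nat.card H.ConnectedComponent = Fintype.card V :=
  myForestCardAux _ H rfl hH

lemma myFromEdgeSetInsert (s : Set (Sym2 V)) (a b : V) :
    fromEdgeSet (insert s(a,b) s) = fromEdgeSet s ⊔ edge a b := by
  ext u v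
  simp only [fromEdgeSet_adj, Set.mem_insert_iff, sup_adj, edge_adj, Sym2.eq_iff]
  constructor
  · rintro ⟨h | h, hne⟩
    · exact Or.inr ⟨by tauto, hne⟩
    · exact Or.inl ⟨h, hne⟩
  · rintro (⟨h, hne⟩ | ⟨h, hne⟩)
    · exact ⟨Or.inr h, hne⟩
    · exact ⟨Or.inl (by tauto), hne⟩

lemma myInsertAcyclic {K : SimpleGraph V} (hK : K.IsAcyclic) {a b : V} (hab : a ≠ b)
    (hr : ¬ K.Reachable a b) : (K ⊔ edge a b).IsAcyclic := by
  intro v c hc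
  by_cases he : s(a, b) ∈ c.edges
  · have hcyc : ∃ (u : V) (p : (K ⊔ edge a b).Walk u u), p.IsCycle ∧ s(a,b) ∈ p.edges :=
      ⟨v, c, hc, he⟩
    have := (adj_and_reachable_delete_edges_iff_exists_cycle.mpr hcyc).2
    refine hr (this.mono ?_)
    intro x y hxy
    rw [deleteEdges_adj, sup_adj] at hxy
    obtain ⟨hK' | hEdge, hne⟩ := hxy
    · exact hK'
    · rw [edge_adj] at hEdge
      exact absurd (by rw [Set.mem_singleton_iff, Sym2.eq_iff]; tauto) hne
  · have hsub : ∀ f ∈ c.edges, f ∈ K.edgeSet := by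
      intro f hf
      have := c.edges_subset_edgeSet hf
      rw [edgeSet_sup, edge_edgeSet_of_ne hab] at this
      rcases this with h | h
      · exact h
      · exact absurd (h ▸ hf) he
    exact hK (c.transfer K hsub) (hc.transfer hsub)

lemma myNotAcyclic {K : SimpleGraph V} {a b : V} (hab : a ≠ b)
    (hne : s(a,b) ∉ K.edgeSet) (hr : K.Reachable a b) : ¬ (K ⊔ edge a b).IsAcyclic := by
  intro hacy
  have hadj : (K ⊔ edge a b).Adj a b := Or.inr (by rw [edge_adj]; tauto)
  have hle : K ≤ (K ⊔ edge a b) \ fromEdgeSet {s(a,b)} := by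
    intro x y hxy
    rw [sdiff_adj, fromEdgeSet_adj]
    refine ⟨Or.inl hxy, ?_⟩
    rintro ⟨h, -⟩
    rw [Set.mem_singleton_iff] at h
    exact hne (h ▸ hxy)
  obtain ⟨u, p, hp, -⟩ := adj_and_reachable_delete_edges_iff_exists_cycle.mp
    ⟨hadj, hr.mono hle⟩
  exact hacy p hp

lemma myEdgeSetCoe {A : Finset (Sym2 V)} (hAd : ∀ e ∈ A, ¬ e.IsDiag) :
    (fromEdgeSet (A : Set (Sym2 V))).edgeSet = (A : Set (Sym2 V)) := by
  rw [edgeSet_fromEdgeSet]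
  ext e
  simp only [Set.mem_diff, Finset.mem_coe, Set.mem_setOf_eq, and_iff_left_iff_imp]
  exact fun he => hAd e he

lemma myAugment [Fintype V] [DecidableEq V] {A B : Finset (Sym2 V)}
    (hAd : ∀ e ∈ A, ¬ e.IsDiag) (hBd : ∀ e ∈ B, ¬ e.IsDiag)
    (hA : (fromEdgeSet (A : Set (Sym2 V))).IsAcyclic)
    (hB : (fromEdgeSet (B : Set (Sym2 V))).IsAcyclic)
    (hcard : B.card < A.card) :
    ∃ e ∈ A, e ∉ B ∧ (fromEdgeSet (insert e (B : Set (Sym2 V)))).IsAcyclic := by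
  by_contra hcon
  push_neg at hcon
  set K := fromEdgeSet (B : Set (Sym2 V)) with hKdef
  have key : ∀ x y : V, (fromEdgeSet (A : Set (Sym2 V))).Adj x y → K.Reachable x y := by
    intro x y hxy
    rw [fromEdgeSet_adj] at hxy
    obtain ⟨hmem, hne⟩ := hxy
    by_cases hB' : s(x,y) ∈ B
    · exact SimpleGraph.Adj.reachable ((fromEdgeSet_adj _).mpr ⟨hB', hne⟩ : K.Adj x y)
    · have hnot := hcon _ hmem hB'
      rw [myFromEdgeSetInsert] at hnot
      by_contra hreach
      exact hnot (myInsertAcyclic hB hne hreach)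
  have hmono : ∀ x y : V, (fromEdgeSet (A : Set (Sym2 V))).Reachable x y →
      K.Reachable x y := by
    intro x y h
    obtain ⟨p⟩ := h
    induction p with
    | nil => exact Reachable.refl _
    | cons h q ih => exact (key _ _ h).trans ih
  set ψ : (fromEdgeSet (A : Set (Sym2 V))).ConnectedComponent → K.ConnectedComponent :=
    fun C => C.lift (fun v => K.connectedComponentMk v)
      (fun v w p _ => ConnectedComponent.eq.mpr (hmono _ _ p.reachable)) with hψ
  have hsurj : Function.Surjective ψ := by
    refine SimpleGraph.ConnectedComponent.ind (fun v => ?_)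
    exact ⟨(fromEdgeSet (A : Set (Sym2 V))).connectedComponentMk v, rfl⟩
  have hcc := Nat.card_le_card_of_surjective ψ hsurj
  have h1 := myForestCard hA
  have h2 := myForestCard hB
  rw [myEdgeSetCoe hAd, Set.ncard_coe_finset] at h1
  rw [myEdgeSetCoe hBd, Set.ncard_coe_finset] at h2
  omega

lemma myPathSep [DecidableEq V] {H : SimpleGraph V} {c d x y : V} (p : H.Walk x y)
    (hp : p.IsTrail) (he : s(c,d) ∈ p.edges) :
    ((H.deleteEdges {s(c,d)}).Reachable x c ∧ (H.deleteEdges {s(c,d)}).Reachable d y) ∨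
    ((H.deleteEdges {s(c,d)}).Reachable x d ∧ (H.deleteEdges {s(c,d)}).Reachable c y) := by
  induction p with
  | nil => simp at he
  | @cons x z y h q ih =>
    rw [Walk.edges_cons, List.mem_cons] at he
    rw [Walk.isTrail_cons] at hp
    by_cases hed : s(x,z) = s(c,d)
    · have hq : ∀ f ∈ q.edges, f ∉ ({s(c,d)} : Set (Sym2 V)) := by
        intro f hf hmem
        rw [Set.mem_singleton_iff] at hmem
        exact hp.2 (by rw [hed, ← hmem]; exact hf)
      have hzb : (H.deleteEdges {s(c,d)}).Reachable z y := (q.toDeleteEdges _ hq).reachable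
      rw [Sym2.eq_iff] at hed
      rcases hed with ⟨rfl, rfl⟩ | ⟨rfl, rfl⟩
      · exact Or.inl ⟨Reachable.refl _, hzb⟩
      · exact Or.inr ⟨Reachable.refl _, hzb⟩
    · have hmem : s(c,d) ∈ q.edges := by
        rcases he with h' | h'
        · exact absurd h'.symm hed
        · exact h'
      have hxz : (H.deleteEdges {s(c,d)}).Adj x z :=
        deleteEdges_adj.mpr ⟨h, by simpa using hed⟩
      rcases ih hp.1 hmem with ⟨hh1, hh2⟩ | ⟨hh1, hh2⟩
      · exact Or.inl ⟨hxz.reachable.trans hh1, hh2⟩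
      · exact Or.inr ⟨hxz.reachable.trans hh1, hh2⟩


end Helpers

open SimpleGraph in
lemma myExchange {V : Type*} [Fintype V] [DecidableEq V] {G Tstar : SimpleGraph V}
    (ρ : Sym2 V → ℝ) (hTs : IsSpanningTree G Tstar)
    {a b c d : V} (hab : a ≠ b)
    (hGab : s(a,b) ∈ G.edgeSet) (habTs : s(a,b) ∉ Tstar.edgeSet)
    (hcdTs : s(c,d) ∈ Tstar.edgeSet)
    (h1 : (Tstar.deleteEdges {s(c,d)}).Reachable a c)
    (h2 : (Tstar.deleteEdges {s(c,d)}).Reachable d b)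
    (hw : ρ s(a,b) < ρ s(c,d)) :
    ∃ T' : SimpleGraph V, IsSpanningTree G T' ∧ totalWeight T' ρ < totalWeight Tstar ρ := by
  classical
  set H' := Tstar.deleteEdges {s(c,d)} with hH'def
  have hTsacy : Tstar.IsAcyclic := hTs.2.IsAcyclic
  have hbr : ¬ H'.Reachable c d :=
    ((isAcyclic_iff_forall_edge_isBridge.mp hTsacy) hcdTs)
  have hnab : ¬ H'.Reachable a b := fun hr => hbr ((h1.symm.trans hr).trans h2.symm)
  set T' := H' ⊔ SimpleGraph.edge a b with hT'def
  have hacyT' : T'.IsAcyclic :=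
    myInsertAcyclic (myAcyclicMono (Tstar.deleteEdges_le _) hTsacy) hab hnab
  have hH'le : H' ≤ T' := le_sup_left
  have hedgeadj : T'.Adj a b := Or.inr (by rw [SimpleGraph.edge_adj]; tauto)
  have hreach_a : ∀ x, T'.Reachable x a := by
    intro x
    have hx : Tstar.Reachable x a := hTs.2.isConnected.preconnected x a
    rcases myReachSplit c d hx with hh | ⟨hh1, hh2⟩ | ⟨hh1, hh2⟩
    · exact hh.mono hH'le
    · exact (hh1.mono hH'le).trans ((h1.symm).mono hH'le)
    · exact ((hh1.mono hH'le).trans (h2.mono hH'le)).trans hedgeadj.reachable.symm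
  have hconn : T'.Connected := by
    rw [SimpleGraph.connected_iff]
    exact ⟨fun x y => (hreach_a x).trans (hreach_a y).symm, ⟨a⟩⟩
  have hle : T' ≤ G := by
    refine sup_le ((Tstar.deleteEdges_le _).trans hTs.1) ?_
    intro x y hxy
    rw [SimpleGraph.edge_adj] at hxy
    have hGadj : G.Adj a b := hGab
    rcases hxy.1 with ⟨rfl, rfl⟩ | ⟨rfl, rfl⟩
    · exact hGadj
    · exact hGadj.symm
  refine ⟨T', ⟨hle, ⟨hconn, hacyT'⟩⟩, ?_⟩
  have hne' : s(a,b) ≠ s(c,d) := fun h => habTs (h ▸ hcdTs)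
  have hedgeT' : T'.edgeSet = (Tstar.edgeSet \ {s(c,d)}) ∪ {s(a,b)} := by
    rw [hT'def, SimpleGraph.edgeSet_sup, hH'def, SimpleGraph.edgeSet_deleteEdges,
      SimpleGraph.edge_edgeSet_of_ne hab]
  have hpt : ∀ e : Sym2 V,
      (@ite ℝ (e ∈ T'.edgeSet)
        (@SimpleGraph.decidableMemEdgeSet V T'
          (fun x y => Classical.propDecidable (T'.Adj x y)) e) (ρ e) 0)
      = (@ite ℝ (e ∈ Tstar.edgeSet)
          (@SimpleGraph.decidableMemEdgeSet V Tstar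
            (fun x y => Classical.propDecidable (Tstar.Adj x y)) e) (ρ e) 0)
        - (if e = s(c,d) then ρ e else 0) + (if e = s(a,b) then ρ e else 0) := by
    intro e
    by_cases hc1 : e = s(c,d)
    · subst hc1
      have hnotmem : s(c,d) ∉ T'.edgeSet := by
        rw [hedgeT']
        simp [Ne.symm hne']
      rw [if_neg hnotmem, if_pos rfl, if_neg (Ne.symm hne'), if_pos hcdTs]
      ring
    · by_cases hc2 : e = s(a,b)
      · subst hc2
        have hmem : s(a,b) ∈ T'.edgeSet := by
          rw [hedgeT']
          simp
        rw [if_pos hmem, if_pos rfl, if_neg hc1, if_neg habTs]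
        ring
      · have hiff : e ∈ T'.edgeSet ↔ e ∈ Tstar.edgeSet := by
          rw [hedgeT']
          simp [hc1, hc2]
        rw [if_neg hc1, if_neg hc2, sub_zero, add_zero]
        by_cases hmem : e ∈ Tstar.edgeSet
        · rw [if_pos hmem, if_pos (hiff.mpr hmem)]
        · rw [if_neg hmem, if_neg (fun hh => hmem (hiff.mp hh))]
  have hsum : totalWeight T' ρ = totalWeight Tstar ρ - ρ s(c,d) + ρ s(a,b) := by
    unfold totalWeight
    refine Eq.trans (Finset.sum_congr rfl (fun e _ => hpt e)) ?_
    rw [Finset.sum_add_distrib, Finset.sum_sub_distrib,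
      Finset.sum_ite_eq' Finset.univ (s(c,d)) ρ,
      Finset.sum_ite_eq' Finset.univ (s(a,b)) ρ, if_pos (Finset.mem_univ _),
      if_pos (Finset.mem_univ _)]
  rw [hsum]
  linarith

/-- If `T*` is a minimum weight spanning tree of `(G,ρ)` and `T` any spanning tree, and the
edges of both trees are listed in increasing order of `ρ`, then the `i`-th weight of `T*`
is at most the `i`-th weight of `T`. -/
theorem kruskal_sorted_weights_le {V : Type*} [Fintype V] [DecidableEq V]
    (G : SimpleGraph V) (hG : G.Connected) (ρ : Sym2 V → ℝ)
    (Tstar : SimpleGraph V) (hTs : IsSpanningTree G Tstar)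
    (hmin : ∀ T : SimpleGraph V, IsSpanningTree G T →
      totalWeight Tstar ρ ≤ totalWeight T ρ)
    (T : SimpleGraph V) (hT : IsSpanningTree G T)
    (k : ℕ) (hk : k = Fintype.card V - 1)
    (f g : Fin k → Sym2 V)
    (hf₁ : ∀ i, f i ∈ Tstar.edgeSet) (hf₂ : Function.Injective f)
    (hf₃ : ∀ e ∈ Tstar.edgeSet, ∃ i, f i = e) (hf₄ : Monotone (ρ ∘ f))
    (hg₁ : ∀ i, g i ∈ T.edgeSet) (hg₂ : Function.Injective g)
    (hg₃ : ∀ e ∈ T.edgeSet, ∃ i, g i = e) (hg₄ : Monotone (ρ ∘ g)) :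
    ∀ i : Fin k, ρ (f i) ≤ ρ (g i) := by
  by_contra hcon
  push_neg at hcon
  obtain ⟨i, hi⟩ := hcon
  set A := (Finset.Iic i).image g with hA
  set B := (Finset.Iio i).image f with hB
  have hAsub : ∀ e ∈ A, e ∈ T.edgeSet := by
    intro e he
    obtain ⟨j, -, rfl⟩ := Finset.mem_image.mp he
    exact hg₁ j
  have hBsub : ∀ e ∈ B, e ∈ Tstar.edgeSet := by
    intro e he
    obtain ⟨j, -, rfl⟩ := Finset.mem_image.mp he
    exact hf₁ j
  have hAd : ∀ e ∈ A, ¬ e.IsDiag := fun e he => T.not_isDiag_of_mem_edgeSet (hAsub e he)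
  have hBd : ∀ e ∈ B, ¬ e.IsDiag := fun e he => Tstar.not_isDiag_of_mem_edgeSet (hBsub e he)
  have hfromA_le : SimpleGraph.fromEdgeSet (A : Set (Sym2 V)) ≤ T := by
    intro x y hxy
    exact (T.mem_edgeSet).mp (hAsub _ hxy.1)
  have hfromB_le : SimpleGraph.fromEdgeSet (B : Set (Sym2 V)) ≤ Tstar := by
    intro x y hxy
    exact (Tstar.mem_edgeSet).mp (hBsub _ hxy.1)
  have hAacy := myAcyclicMono hfromA_le hT.2.IsAcyclic
  have hBacy := myAcyclicMono hfromB_le hTs.2.IsAcyclic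
  have hcardA : A.card = (i : ℕ) + 1 := by
    rw [hA, Finset.card_image_of_injective _ hg₂, Fin.card_Iic]
  have hcardB : B.card = (i : ℕ) := by
    rw [hB, Finset.card_image_of_injective _ hf₂, Fin.card_Iio]
  obtain ⟨e, heA, heB, hacy⟩ := myAugment hAd hBd hAacy hBacy (by omega)
  obtain ⟨j, hj, rfl⟩ := Finset.mem_image.mp heA
  have hji : j ≤ i := Finset.mem_Iic.mp hj
  have hrj : ρ (g j) ≤ ρ (g i) := hg₄ hji
  have hgjTs : g j ∉ Tstar.edgeSet := by
    intro hmem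
    obtain ⟨j', hj'⟩ := hf₃ _ hmem
    have hnot : j' ∉ Finset.Iio i := fun hin => heB (Finset.mem_image.mpr ⟨j', hin, hj'⟩)
    have hij' : i ≤ j' := by rwa [Finset.mem_Iio, not_lt] at hnot
    have hmono := hf₄ hij'
    simp only [Function.comp_apply] at hmono
    rw [hj'] at hmono
    linarith
  obtain ⟨a, b, hab_eq⟩ := mySym2Rep (g j)
  have hab : a ≠ b := by
    have hd := T.not_isDiag_of_mem_edgeSet (hg₁ j)
    rw [hab_eq, Sym2.mk_isDiag_iff] at hd
    exact hd
  set K := SimpleGraph.fromEdgeSet (B : Set (Sym2 V)) with hK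
  have hKnotedge : s(a,b) ∉ K.edgeSet := by
    rw [hK, myEdgeSetCoe hBd, ← hab_eq]
    exact fun h => heB h
  have hKreach : ¬ K.Reachable a b := by
    intro hr
    rw [hab_eq, myFromEdgeSetInsert] at hacy
    exact myNotAcyclic hab hKnotedge hr hacy
  obtain ⟨w⟩ := hTs.2.isConnected.preconnected a b
  set p : Tstar.Walk a b := (w.toPath : Tstar.Walk a b) with hp_def
  have hp : p.IsPath := w.toPath.property
  have hex : ∃ e' ∈ p.edges, e' ∉ B := by
    by_contra hall
    push_neg at hall
    have hsub : ∀ f' ∈ p.edges, f' ∈ K.edgeSet := by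
      intro f' hf'
      rw [hK, myEdgeSetCoe hBd]
      exact hall f' hf'
    exact hKreach (p.transfer K hsub).reachable
  obtain ⟨e', he'p, he'B⟩ := hex
  have he'Ts : e' ∈ Tstar.edgeSet := p.edges_subset_edgeSet he'p
  obtain ⟨j'', hj''⟩ := hf₃ _ he'Ts
  have hnot'' : j'' ∉ Finset.Iio i := fun hin => he'B (Finset.mem_image.mpr ⟨j'', hin, hj''⟩)
  have hij'' : i ≤ j'' := by rwa [Finset.mem_Iio, not_lt] at hnot''
  have hρe' : ρ (f i) ≤ ρ e' := by
    have hmono := hf₄ hij''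
    simp only [Function.comp_apply] at hmono
    rwa [hj''] at hmono
  have hw : ρ s(a,b) < ρ e' := by rw [← hab_eq]; linarith
  have hGab : s(a,b) ∈ G.edgeSet := by
    rw [← hab_eq]
    exact SimpleGraph.edgeSet_mono hT.1 (hg₁ j)
  have habTs : s(a,b) ∉ Tstar.edgeSet := by rw [← hab_eq]; exact hgjTs
  obtain ⟨c, d, hcd_eq⟩ := mySym2Rep e'
  subst hcd_eq
  have hsep := myPathSep p hp.isTrail he'p
  rcases hsep with ⟨hh1, hh2⟩ | ⟨hh1, hh2⟩
  · obtain ⟨T', hsp, hlt⟩ := myExchange ρ hTs hab hGab habTs he'Ts hh1 hh2 hw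
    exact absurd (hmin T' hsp) (not_le.mpr hlt)
  · have hswap : s(c,d) = s(d,c) := Sym2.eq_swap
    rw [hswap] at hh1 hh2 he'Ts hw
    obtain ⟨T', hsp, hlt⟩ := myExchange ρ hTs hab hGab habTs he'Ts hh1 hh2 hw
    exact absurd (hmin T' hsp) (not_le.mpr hlt)
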